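/- Let Σ be a positive definite real p×p matrix whose inverse P = Σ⁻¹ is diagonally dominant, i.e., for every j, ∑_{k ≠ j} |P_{jk}| ≤ P_{jj}. Let S be the diagonal matrix with entries S_{jj} = 1/P_{jj}. Then the 2p×2p block matrix [[Σ, Σ−S],[Σ−S, Σ]] is positive semidefinite. -/

import Mathlib

open Matrix

/-- Swapping the order of summation over off-diagonal pairs. -/
lemma ci_sum_erase_swap {n : Type*} [Fintype n] [DecidableEq n] (f : n → n → ℝ) :
    ∑ j, ∑ k ∈ Finset.univ.erase j, f j k = ∑ k, ∑ j ∈ Finset.univ.erase k, f j k := by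
  simp only [Finset.sum_erase_eq_sub (Finset.mem_univ _)]
  rw [Finset.sum_sub_distrib, Finset.sum_sub_distrib, Finset.sum_comm]

lemma ci_neg_half_sum {ι : Type*} (s : Finset ι) (c : ι → ℝ) :
    ∑ x ∈ s, -(c x / 2) = -((∑ x ∈ s, c x) / 2) := by
  rw [Finset.sum_neg_distrib, ← Finset.sum_div]

/-- A symmetric, diagonally dominant real matrix is positive semidefinite. -/
lemma ci_diagdom_posSemidef {n : Type*} [Fintype n] [DecidableEq n] {A : Matrix n n ℝ}
    (hsym : A.IsHermitian)
    (hdom : ∀ j, ∑ k ∈ Finset.univ.erase j, |A j k| ≤ A j j) : A.PosSemidef := by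
  refine .of_dotProduct_mulVec_nonneg hsym fun x => ?_
  have habs : ∀ j k : n, |A j k| = |A k j| := by
    intro j k
    have : A k j = A j k := by
      have := congrFun (congrFun hsym.eq j) k
      simpa [conjTranspose_apply] using this
    rw [this]
  have hqf : dotProduct (star x) (A *ᵥ x) = ∑ j, ∑ k, x j * (A j k * x k) := by
    simp [dotProduct, mulVec, Finset.mul_sum]
  rw [hqf]
  set r : n → ℝ := fun j => ∑ k ∈ Finset.univ.erase j, |A j k| with hr
  have key : ∀ j, A j j * x j ^ 2 +
      ∑ k ∈ Finset.univ.erase j, -((|A j k| * x j ^ 2 + |A j k| * x k ^ 2) / 2)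
      ≤ ∑ k, x j * (A j k * x k) := by
    intro j
    rw [← Finset.add_sum_erase _ _ (Finset.mem_univ j)]
    refine add_le_add (le_of_eq (by ring)) (Finset.sum_le_sum fun k _ => ?_)
    have h1 : 0 ≤ |A j k| - A j k := sub_nonneg.mpr (le_abs_self _)
    have h2 : 0 ≤ |A j k| + A j k := by
      have := neg_abs_le (A j k); linarith
    nlinarith [mul_nonneg h1 (sq_nonneg (x j - x k)), mul_nonneg h2 (sq_nonneg (x j + x k))]
  have lower := Finset.sum_le_sum (fun j (_ : j ∈ Finset.univ) => key j)
  refine le_trans ?_ lower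
  set T := ∑ j, r j * x j ^ 2 with hT
  have T1 : ∑ j, ∑ k ∈ Finset.univ.erase j, |A j k| * x j ^ 2 = T := by
    refine Finset.sum_congr rfl fun j _ => ?_
    rw [hr, ← Finset.sum_mul]
  have T2 : ∑ j, ∑ k ∈ Finset.univ.erase j, |A j k| * x k ^ 2 = T := by
    rw [ci_sum_erase_swap]
    refine Finset.sum_congr rfl fun k _ => ?_
    rw [hr, ← Finset.sum_mul]
    exact congrArg (· * x k ^ 2) (Finset.sum_congr rfl fun j _ => habs j k)
  have hY : ∑ j, ∑ k ∈ Finset.univ.erase j, -((|A j k| * x j ^ 2 + |A j k| * x k ^ 2) / 2)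
      = -T := by
    have e1 : ∀ j, ∑ k ∈ Finset.univ.erase j, -((|A j k| * x j ^ 2 + |A j k| * x k ^ 2) / 2)
        = -((∑ k ∈ Finset.univ.erase j, (|A j k| * x j ^ 2 + |A j k| * x k ^ 2)) / 2) :=
      fun j => ci_neg_half_sum _ _
    rw [Finset.sum_congr rfl fun j _ => e1 j, ci_neg_half_sum]
    have : ∑ j, ∑ k ∈ Finset.univ.erase j, (|A j k| * x j ^ 2 + |A j k| * x k ^ 2)
        = T + T := by
      rw [show (∑ j, ∑ k ∈ Finset.univ.erase j, (|A j k| * x j ^ 2 + |A j k| * x k ^ 2))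
          = (∑ j, ((∑ k ∈ Finset.univ.erase j, |A j k| * x j ^ 2)
            + ∑ k ∈ Finset.univ.erase j, |A j k| * x k ^ 2)) from
        Finset.sum_congr rfl fun j _ => Finset.sum_add_distrib,
        Finset.sum_add_distrib, T1, T2]
    rw [this]; ring
  calc (0:ℝ) ≤ ∑ j, (A j j - r j) * x j ^ 2 :=
        Finset.sum_nonneg fun j _ => mul_nonneg (sub_nonneg.mpr (hdom j)) (sq_nonneg _)
    _ = ∑ j, (A j j * x j ^ 2 + ∑ k ∈ Finset.univ.erase j,
          -((|A j k| * x j ^ 2 + |A j k| * x k ^ 2) / 2)) := by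
        rw [Finset.sum_add_distrib, hY,
          show (∑ j, (A j j - r j) * x j ^ 2) = (∑ j, A j j * x j ^ 2) - T by
            rw [hT, ← Finset.sum_sub_distrib]
            exact Finset.sum_congr rfl fun j _ => by ring]
        ring

/-- A block-diagonal matrix with PSD blocks is PSD. -/
lemma ci_posSemidef_fromBlocks_diag {m n : Type*} [Fintype m] [Fintype n]
    {A : Matrix m m ℝ} {D : Matrix n n ℝ} (hA : A.PosSemidef) (hD : D.PosSemidef) :
    (Matrix.fromBlocks A 0 0 D).PosSemidef := by
  refine .of_dotProduct_mulVec_nonneg ?_ ?_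
  · show _ᴴ = _
    simp only [fromBlocks_conjTranspose, conjTranspose_zero, hA.1.eq, hD.1.eq]
  · intro x
    have hx : x = Sum.elim (x ∘ Sum.inl) (x ∘ Sum.inr) := by
      funext i; cases i <;> rfl
    rw [fromBlocks_mulVec]
    simp only [zero_mulVec, add_zero, zero_add]
    calc (0:ℝ) ≤ star (x ∘ Sum.inl) ⬝ᵥ (A *ᵥ (x ∘ Sum.inl))
          + star (x ∘ Sum.inr) ⬝ᵥ (D *ᵥ (x ∘ Sum.inr)) := add_nonneg (hA.dotProduct_mulVec_nonneg _) (hD.dotProduct_mulVec_nonneg _)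
      _ = _ := by
        rw [← sumElim_dotProduct_sumElim]
        congr 1
        · rw [hx]; funext i; cases i <;> rfl

/-- Theorem 5, case 2: if the precision matrix `P = Σ⁻¹` is diagonally dominant,
the conditional independence knockoff with `s_j = 1/P_jj` exists: the extended
covariance matrix is PSD. -/
theorem stmt5 {p : ℕ} (Sigma : Matrix (Fin p) (Fin p) ℝ) (hSigma : Sigma.PosDef)
    (P : Matrix (Fin p) (Fin p) ℝ) (hP : P = Sigma⁻¹)
    (hdom : ∀ j, ∑ k ∈ Finset.univ.erase j, |P j k| ≤ P j j)
    (S : Matrix (Fin p) (Fin p) ℝ) (hS : S = Matrix.diagonal (fun j => (P j j)⁻¹)) :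
    (Matrix.fromBlocks Sigma (Sigma - S) (Sigma - S) Sigma).PosSemidef := by
  have hPd : P.PosDef := by rw [hP]; exact hSigma.inv
  have hPh : P.IsHermitian := hPd.1
  have hdet : IsUnit Sigma.det := isUnit_iff_ne_zero.mpr hSigma.det_pos.ne'
  have hSP : Sigma * P = 1 := by rw [hP]; exact mul_nonsing_inv _ hdet
  have hPS : P * Sigma = 1 := by rw [hP]; exact nonsing_inv_mul _ hdet
  have hdpos : ∀ j, 0 < P j j := by
    intro j
    have h := hPd.dotProduct_mulVec_pos (x := Pi.single j 1) (by intro h; simpa using congrFun h j)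
    simpa [dotProduct, mulVec, Pi.single_apply, Finset.sum_ite_eq] using h
  have hSh : S.IsHermitian := by rw [hS]; exact isHermitian_diagonal _
  set D : Matrix (Fin p) (Fin p) ℝ := Matrix.diagonal (fun j => P j j) with hD
  have hDh : D.IsHermitian := isHermitian_diagonal _
  have hDS : D * S = 1 := by
    rw [hD, hS, diagonal_mul_diagonal]
    rw [show (fun j => P j j * (P j j)⁻¹) = fun _ => (1:ℝ) from
      funext fun j => mul_inv_cancel₀ (hdpos j).ne']
    exact diagonal_one
  have hSD : S * D = 1 := by
    rw [hD, hS, diagonal_mul_diagonal]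
    rw [show (fun j => (P j j)⁻¹ * P j j) = fun _ => (1:ℝ) from
      funext fun j => inv_mul_cancel₀ (hdpos j).ne']
    exact diagonal_one
  -- the diagonally dominant comparison matrix
  set A : Matrix (Fin p) (Fin p) ℝ := (2:ℝ) • D - P with hA
  have hAh : A.IsHermitian := by
    rw [hA]
    show _ᴴ = _
    rw [conjTranspose_sub, conjTranspose_smul, hPh.eq, hDh.eq]
    norm_num
  have hAdom : ∀ j, ∑ k ∈ Finset.univ.erase j, |A j k| ≤ A j j := by
    intro j
    have h1 : A j j = P j j := by
      rw [hA]
      simp only [hD, Matrix.sub_apply, Matrix.smul_apply, Matrix.diagonal_apply_eq, smul_eq_mul]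
      ring
    have h2 : ∀ k ∈ Finset.univ.erase j, |A j k| = |P j k| := by
      intro k hk
      have hkj : j ≠ k := fun h => (Finset.mem_erase.mp hk).1 h.symm
      rw [hA]
      simp only [hD, Matrix.sub_apply, Matrix.smul_apply, Matrix.diagonal_apply_ne _ hkj,
        smul_eq_mul, mul_zero, zero_sub, abs_neg]
    rw [h1, Finset.sum_congr rfl h2]
    exact hdom j
  have hAsd : A.PosSemidef := ci_diagdom_posSemidef hAh hAdom
  -- congruence factors
  set C : Matrix (Fin p) (Fin p) ℝ := (1/2:ℝ) • (S * P) with hC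
  set E : Matrix (Fin p) (Fin p) ℝ := 1 - C with hE
  have hCH : Cᴴ = (1/2:ℝ) • (P * S) := by
    rw [hC, conjTranspose_smul, conjTranspose_mul, hPh.eq, hSh.eq]
    norm_num
  have hEH : Eᴴ = 1 - (1/2:ℝ) • (P * S) := by
    rw [hE, conjTranspose_sub, conjTranspose_one, hCH]
  have hDSX : ∀ X : Matrix (Fin p) (Fin p) ℝ, D * (S * X) = X := fun X => by
    rw [← Matrix.mul_assoc, hDS, Matrix.one_mul]
  have hSDX : ∀ X : Matrix (Fin p) (Fin p) ℝ, S * (D * X) = X := fun X => by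
    rw [← Matrix.mul_assoc, hSD, Matrix.one_mul]
  have hBid : Cᴴ * A * C + Eᴴ * P * E = P - (1/2:ℝ) • (P * (S * P)) := by
    rw [hCH, hEH, hA, hE, hC]
    simp only [Matrix.mul_sub, Matrix.sub_mul, Matrix.mul_smul, Matrix.smul_mul,
      Matrix.mul_one, Matrix.one_mul, Matrix.mul_assoc, smul_smul, smul_sub, sub_smul,
      hDSX, hSDX]
    module
  have hBsd : (P - (1/2:ℝ) • (P * (S * P))).PosSemidef := by
    rw [← hBid]
    exact (hAsd.conjTranspose_mul_mul_same C).add (hPd.posSemidef.conjTranspose_mul_mul_same E)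
  -- transport with Σ
  have hSPX : ∀ X : Matrix (Fin p) (Fin p) ℝ, Sigma * (P * X) = X := fun X => by
    rw [← Matrix.mul_assoc, hSP, Matrix.one_mul]
  have hKid : Sigma * (P - (1/2:ℝ) • (P * (S * P))) * Sigma = Sigma - (1/2:ℝ) • S := by
    simp only [Matrix.sub_mul, Matrix.mul_sub, Matrix.smul_mul, Matrix.mul_smul,
      Matrix.mul_assoc, hSPX, hPS, Matrix.mul_one, Matrix.one_mul]
  have hKsd : (Sigma - (1/2:ℝ) • S).PosSemidef := by
    have h := hBsd.conjTranspose_mul_mul_same Sigma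
    rwa [hSigma.1.eq, hKid] at h
  have hShalf : ((1/2:ℝ) • S).PosSemidef := by
    have : (1/2:ℝ) • S = Matrix.diagonal (fun j => (1/2:ℝ) * (P j j)⁻¹) := by
      rw [hS]
      ext i j
      by_cases h : i = j <;> simp [Matrix.diagonal_apply, h]
    rw [this]
    exact Matrix.PosSemidef.diagonal fun j => by
      have := (hdpos j).le
      positivity
  have hM := ci_posSemidef_fromBlocks_diag hKsd hShalf
  have hfin := hM.conjTranspose_mul_mul_same
    (B := (Matrix.fromBlocks (1:Matrix (Fin p) (Fin p) ℝ) 1 1 (-1) :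
      Matrix (Fin p ⊕ Fin p) (Fin p ⊕ Fin p) ℝ))
  have hfb : (Matrix.fromBlocks (1:Matrix (Fin p) (Fin p) ℝ) 1 1 (-1))ᴴ *
        Matrix.fromBlocks (Sigma - (1/2:ℝ) • S) 0 0 ((1/2:ℝ) • S) *
        (Matrix.fromBlocks (1:Matrix (Fin p) (Fin p) ℝ) 1 1 (-1))
      = Matrix.fromBlocks ((Sigma - (1/2:ℝ) • S) + (1/2:ℝ) • S)
          ((Sigma - (1/2:ℝ) • S) - (1/2:ℝ) • S)
          ((Sigma - (1/2:ℝ) • S) - (1/2:ℝ) • S)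
          ((Sigma - (1/2:ℝ) • S) + (1/2:ℝ) • S) := by
    rw [fromBlocks_conjTranspose, fromBlocks_multiply, fromBlocks_multiply]
    simp only [conjTranspose_one, conjTranspose_neg, Matrix.one_mul, Matrix.mul_one,
      Matrix.zero_mul, Matrix.mul_zero, add_zero, zero_add, Matrix.neg_mul, Matrix.mul_neg,
      neg_neg, ← sub_eq_add_neg]
    rw [fromBlocks_inj]
    refine ⟨rfl, by abel, by abel, by abel⟩
  have e1 : (Sigma - (1/2:ℝ) • S) + (1/2:ℝ) • S = Sigma := by module
  have e2 : (Sigma - (1/2:ℝ) • S) - (1/2:ℝ) • S = Sigma - S := by module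
  rw [hfb, e1, e2] at hfin
  exact hfin
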